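/- Let ξ be a random variable with ℙ(ξ=1)=λ, ℙ(ξ=2)=1−λ, independent of two independent pairs of processes (Z¹,π¹) and (Z²,π²) where, for i=1,2 and all t, π^i_t(k) = ℙ(X^i_t = k | ℱ^{(Y^i,π^i)}_t). Define (Z,π) to equal (Z^i, π^i) on the event {ξ=i}. Then for all t and k, π_t(k) = ℙ(X_t = k | ℱ^{(Y,π)}_t), where ℱ^{(Y,π)}_t is the natural filtration of (Y,π) and Z = (X,Y). -/

import Mathlib

open MeasureTheory ProbabilityTheory

private lemma indepFun_of_measurable_comap {Ω β γ β' γ' : Type*} [MeasurableSpace Ω]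
    [mβ : MeasurableSpace β] [mγ : MeasurableSpace γ]
    [MeasurableSpace β'] [MeasurableSpace γ'] {μ : MeasureTheory.Measure Ω}
    {f : Ω → β} {g : Ω → γ} {u : Ω → β'} {v : Ω → γ'}
    (h : IndepFun f g μ) (hu : Measurable[mβ.comap f] u) (hv : Measurable[mγ.comap g] v) :
    IndepFun u v μ := by
  rw [IndepFun_iff_Indep] at h ⊢
  exact indep_of_indep_of_le_right (indep_of_indep_of_le_left h hu.comap_le) hv.comap_le

private lemma measurable_mix {Ω β : Type*} [MeasurableSpace Ω] [MeasurableSpace β]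
    {ξ : Ω → Fin 2} (hξ : Measurable ξ) (g : Fin 2 → Ω → β) (hg : ∀ i, Measurable (g i)) :
    Measurable fun ω => g (ξ ω) ω := by
  have h : (fun ω => g (ξ ω) ω) = Set.piecewise {ω | ξ ω = 0} (g 0) (g 1) := by
    funext ω
    by_cases h : ξ ω = 0
    · simp [Set.piecewise, h]
    · simp [Set.piecewise, h, (ξ ω).eq_one_of_ne_zero h]
  rw [h]
  exact Measurable.piecewise (hξ (measurableSet_singleton 0)) (hg 0) (hg 1)

/-- The natural filtration σ-algebra of a process `W` up to time `t`. -/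
private def sigUpTo {Ω β : Type*} [MeasurableSpace Ω] [MeasurableSpace β]
    (W : NNReal → Ω → β) (t : NNReal) : MeasurableSpace Ω :=
  ⨆ s ∈ Set.Iic t, MeasurableSpace.comap (W s) inferInstance

private lemma sigUpTo_le {Ω β : Type*} [m0 : MeasurableSpace Ω] [MeasurableSpace β]
    {W : NNReal → Ω → β} (hW : ∀ s, Measurable (W s)) (t : NNReal) :
    sigUpTo W t ≤ m0 :=
  iSup₂_le fun s _ => (hW s).comap_le

private lemma le_sigUpTo {Ω β : Type*} [MeasurableSpace Ω] [MeasurableSpace β]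
    (W : NNReal → Ω → β) {s t : NNReal} (hs : s ∈ Set.Iic t) :
    MeasurableSpace.comap (W s) inferInstance ≤ sigUpTo W t :=
  le_iSup₂ (f := fun s (_ : s ∈ Set.Iic t) => MeasurableSpace.comap (W s) inferInstance) s hs

private lemma sigUpTo_eq_generateFrom {Ω β : Type*} [MeasurableSpace Ω] [MeasurableSpace β]
    (W : NNReal → Ω → β) (t : NNReal) :
    sigUpTo W t = MeasurableSpace.generateFrom
      (piiUnionInter
        (fun s => {A | MeasurableSet[MeasurableSpace.comap (W s) inferInstance] A})
        (Set.Iic t)) :=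
  (generateFrom_piiUnionInter_measurableSet
    (fun s => MeasurableSpace.comap (W s) inferInstance) (Set.Iic t)).symm

set_option maxHeartbeats 800000 in
set_option synthInstance.maxHeartbeats 40000 in
/-- mixing two independent pairs `(Z¹,π¹)`, `(Z²,π²)` by an independent
Bernoulli variable `ξ` preserves the conditional-law property: if for each `i` and `t`,
`π^i_t(k) = ℙ(X^i_t = k | ℱ^{(Y^i,π^i)}_t)`, then the process `(Z,π)` equal to `(Z^i,π^i)`
on `{ξ = i}` satisfies `π_t(k) = ℙ(X_t = k | ℱ^{(Y,π)}_t)`. -/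
theorem stmt_19 {Ω K : Type*} [m0 : MeasurableSpace Ω]
    [Fintype K] [MeasurableSpace K] [MeasurableSingletonClass K]
    (μ : Measure Ω) [IsProbabilityMeasure μ]
    (lam : ℝ) (hlam : lam ∈ Set.Icc (0 : ℝ) 1)
    (X : Fin 2 → NNReal → Ω → K) (Y : Fin 2 → NNReal → Ω → ℝ)
    (π : Fin 2 → NNReal → Ω → K → ℝ) (ξ : Ω → Fin 2)
    (hX : ∀ i t, Measurable (X i t)) (hY : ∀ i t, Measurable (Y i t))
    (hπ : ∀ i t, Measurable (π i t)) (hξ : Measurable ξ)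
    (hlaw0 : μ {ω | ξ ω = 0} = ENNReal.ofReal lam)
    (hlaw1 : μ {ω | ξ ω = 1} = ENNReal.ofReal (1 - lam))
    -- the two pairs of processes are independent of each other:
    (hindep12 : IndepFun
      (fun ω => fun t : NNReal => (X 0 t ω, Y 0 t ω, π 0 t ω))
      (fun ω => fun t : NNReal => (X 1 t ω, Y 1 t ω, π 1 t ω)) μ)
    -- `ξ` is independent of the pair of the two processes:
    (hindepξ : IndepFun ξ
      (fun ω => ((fun t : NNReal => (X 0 t ω, Y 0 t ω, π 0 t ω)),
                 (fun t : NNReal => (X 1 t ω, Y 1 t ω, π 1 t ω)))) μ)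
    -- conditional-law property for each component process:
    (hcond : ∀ (i : Fin 2) (t : NNReal) (k : K),
      (fun ω => π i t ω k) =ᵐ[μ]
        μ[Set.indicator {ω | X i t ω = k} (fun _ => (1 : ℝ)) |
          ⨆ s ∈ Set.Iic t,
            MeasurableSpace.comap (fun ω => (Y i s ω, π i s ω)) inferInstance]) :
    ∀ (t : NNReal) (k : K),
      (fun ω => π (ξ ω) t ω k) =ᵐ[μ]
        μ[Set.indicator {ω | X (ξ ω) t ω = k} (fun _ => (1 : ℝ)) |
          ⨆ s ∈ Set.Iic t,
            MeasurableSpace.comap (fun ω => (Y (ξ ω) s ω, π (ξ ω) s ω)) inferInstance] := by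
  intro t k
  classical
  -- notation
  set p : Ω → ℝ := fun ω => π (ξ ω) t ω k with hp_def
  set q : Ω → ℝ := Set.indicator {ω | X (ξ ω) t ω = k} (fun _ => (1 : ℝ)) with hq_def
  set Wmix : NNReal → Ω → ℝ × (K → ℝ) := fun s ω => (Y (ξ ω) s ω, π (ξ ω) s ω) with hWmix_def
  set W : Fin 2 → NNReal → Ω → ℝ × (K → ℝ) := fun i s ω => (Y i s ω, π i s ω) with hW_def
  -- path maps
  set Φ : Fin 2 → Ω → (NNReal → K × ℝ × (K → ℝ)) :=
      fun i ω => fun s => (X i s ω, Y i s ω, π i s ω) with hΦ_def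
  have hΦm : ∀ i, Measurable (Φ i) := fun i =>
    measurable_pi_lambda _ fun s => (hX i s).prodMk ((hY i s).prodMk (hπ i s))
  have hmΦle : ∀ i, MeasurableSpace.comap (Φ i) inferInstance ≤ m0 := fun i => (hΦm i).comap_le
  -- basic measurability facts
  have hWm : ∀ (i : Fin 2) (s : NNReal), Measurable (W i s) :=
    fun i s => (hY i s).prodMk (hπ i s)
  have hWmixm : ∀ s : NNReal, Measurable (Wmix s) := fun s =>
    measurable_mix hξ (fun i ω => (Y i s ω, π i s ω)) (fun i => hWm i s)
  have hm : sigUpTo Wmix t ≤ m0 := sigUpTo_le hWmixm t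
  have hFle : ∀ i, sigUpTo (W i) t ≤ m0 := fun i => sigUpTo_le (hWm i) t
  have hFΦ : ∀ i, sigUpTo (W i) t ≤ MeasurableSpace.comap (Φ i) inferInstance := by
    intro i
    refine iSup₂_le fun s _ => Measurable.comap_le ?_
    have h1 : Measurable fun pth : NNReal → K × ℝ × (K → ℝ) => ((pth s).2.1, (pth s).2.2) :=
      ((measurable_pi_apply s).snd.fst).prodMk ((measurable_pi_apply s).snd.snd)
    exact h1.comp (comap_measurable (Φ i))
  haveI hSF : SigmaFinite (μ.trim hm) :=
    @IsFiniteMeasure.toSigmaFinite Ω (sigUpTo Wmix t) (μ.trim hm) (isFiniteMeasure_trim hm)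
  have hsf : ∀ i, SigmaFinite (μ.trim (hFle i)) := fun i =>
    @IsFiniteMeasure.toSigmaFinite Ω (sigUpTo (W i) t) (μ.trim (hFle i))
      (isFiniteMeasure_trim (hFle i))
  -- measurable sets for ξ
  have hξset : ∀ i : Fin 2, MeasurableSet {ω | ξ ω = i} :=
    fun i => hξ (measurableSet_singleton i)
  -- integrability
  have hfint : ∀ i : Fin 2, Integrable (fun ω => π i t ω k) μ :=
    fun i => integrable_condExp.congr (hcond i t k).symm
  have hXset : ∀ i : Fin 2, MeasurableSet {ω | X i t ω = k} :=
    fun i => hX i t (measurableSet_singleton k)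
  have hgint : ∀ i : Fin 2,
      Integrable (Set.indicator {ω | X i t ω = k} (fun _ => (1 : ℝ))) μ :=
    fun i => (integrable_const (1 : ℝ)).indicator (hXset i)
  have hXmix : MeasurableSet {ω | X (ξ ω) t ω = k} :=
    (measurable_mix hξ (fun i ω => X i t ω) (fun i => hX i t)) (measurableSet_singleton k)
  have hqint : Integrable q μ := (integrable_const (1 : ℝ)).indicator hXmix
  have hpint : Integrable p μ := by
    have hsplit : p = fun ω =>
        Set.indicator {ω | ξ ω = 0} (fun ω => π 0 t ω k) ω
          + Set.indicator {ω | ξ ω = 1} (fun ω => π 1 t ω k) ω := by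
      funext ω
      by_cases h : ξ ω = 0
      · simp [hp_def, Set.indicator_apply, h]
      · simp [hp_def, Set.indicator_apply, h, (ξ ω).eq_one_of_ne_zero h]
    rw [hsplit]
    exact (((hfint 0).indicator (hξset 0)).add ((hfint 1).indicator (hξset 1)))
  -- independence of ξ and each path
  have hξΦ : ∀ i, IndepFun ξ (Φ i) μ := by
    intro i
    fin_cases i
    · exact hindepξ.comp measurable_id measurable_fst
    · exact hindepξ.comp measurable_id measurable_snd
  -- key independence factorization
  have key : ∀ (i : Fin 2) (h : Ω → ℝ),
      Measurable[MeasurableSpace.comap (Φ i) inferInstance] h →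
      ∀ Ai : Set Ω, MeasurableSet[MeasurableSpace.comap (Φ i) inferInstance] Ai →
      ∫ ω in Ai ∩ {ω | ξ ω = i}, h ω ∂μ
        = (μ {ω | ξ ω = i}).toReal * ∫ ω in Ai, h ω ∂μ := by
    intro i h hhm Ai hAi
    have hAi0 : MeasurableSet Ai := hmΦle i _ hAi
    set u : Ω → ℝ := Set.indicator {ω | ξ ω = i} (fun _ => (1 : ℝ)) with hu_def
    set v : Ω → ℝ := Set.indicator Ai h with hv_def
    have hum : Measurable u := measurable_const.indicator (hξset i)
    have hvm : Measurable v := (hhm.mono (hmΦle i) le_rfl).indicator hAi0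
    have huv : IndepFun u v μ := by
      refine indepFun_of_measurable_comap (hξΦ i) ?_ ?_
      · exact measurable_const.indicator ⟨{i}, measurableSet_singleton i, rfl⟩
      · exact hhm.indicator hAi
    have hmul : ∫ ω, (u * v) ω ∂μ = (∫ ω, u ω ∂μ) * ∫ ω, v ω ∂μ :=
      huv.integral_mul_eq_mul_integral hum.aestronglyMeasurable hvm.aestronglyMeasurable
    have huvind : u * v = Set.indicator (Ai ∩ {ω | ξ ω = i}) h := by
      funext ω
      by_cases h1 : ω ∈ Ai <;> by_cases h2 : ξ ω = i <;>
        simp [hu_def, hv_def, Set.indicator_apply, h1, h2]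
    have hu_int : ∫ ω, u ω ∂μ = (μ {ω | ξ ω = i}).toReal := by
      rw [hu_def, integral_indicator_const (1 : ℝ) (hξset i)]
      simp [measureReal_def]
    have hv_int : ∫ ω, v ω ∂μ = ∫ ω in Ai, h ω ∂μ := integral_indicator hAi0
    rw [← integral_indicator (hAi0.inter (hξset i)), ← huvind, hmul, hu_int, hv_int]
  -- set-integral equality on each component σ-algebra
  have key2 : ∀ (i : Fin 2) (Ai : Set Ω), MeasurableSet[sigUpTo (W i) t] Ai →
      ∫ ω in Ai, π i t ω k ∂μ
        = ∫ ω in Ai, Set.indicator {ω | X i t ω = k} (fun _ => (1 : ℝ)) ω ∂μ := by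
    intro i Ai hAi
    have hAi0 : MeasurableSet Ai := hFle i _ hAi
    haveI := hsf i
    have h1 : ∫ ω in Ai, π i t ω k ∂μ
        = ∫ ω in Ai, (μ[Set.indicator {ω | X i t ω = k} (fun _ => (1 : ℝ)) |
            sigUpTo (W i) t]) ω ∂μ := by
      refine setIntegral_congr_ae hAi0 ?_
      filter_upwards [hcond i t k] with ω hω _
      exact hω
    rw [h1, setIntegral_condExp (hFle i) (hgint i) hAi]
  -- the main set lemma
  have main : ∀ A : Set Ω, MeasurableSet A →
      (∀ i : Fin 2, ∃ Ai : Set Ω, MeasurableSet[sigUpTo (W i) t] Ai ∧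
        A ∩ {ω | ξ ω = i} = Ai ∩ {ω | ξ ω = i}) →
      ∫ ω in A, p ω ∂μ = ∫ ω in A, q ω ∂μ := by
    intro A hA hdec
    have piece : ∀ i : Fin 2,
        ∫ ω in A ∩ {ω | ξ ω = i}, p ω ∂μ = ∫ ω in A ∩ {ω | ξ ω = i}, q ω ∂μ := by
      intro i
      obtain ⟨Ai, hAim, hAeq⟩ := hdec i
      have hAimΦ : MeasurableSet[MeasurableSpace.comap (Φ i) inferInstance] Ai := hFΦ i _ hAim
      have hp1 : ∫ ω in A ∩ {ω | ξ ω = i}, p ω ∂μ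
          = ∫ ω in A ∩ {ω | ξ ω = i}, π i t ω k ∂μ := by
        refine setIntegral_congr_fun (hA.inter (hξset i)) fun ω hω => ?_
        have hi : ξ ω = i := hω.2
        simp only [hp_def, hi]
      have hq1 : ∫ ω in A ∩ {ω | ξ ω = i}, q ω ∂μ
          = ∫ ω in A ∩ {ω | ξ ω = i},
              Set.indicator {ω | X i t ω = k} (fun _ => (1 : ℝ)) ω ∂μ := by
        refine setIntegral_congr_fun (hA.inter (hξset i)) fun ω hω => ?_
        have hi : ξ ω = i := hω.2
        simp only [hq_def, Set.indicator_apply, Set.mem_setOf_eq, hi]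
      have hfm : Measurable[MeasurableSpace.comap (Φ i) inferInstance]
          fun ω => π i t ω k := by
        have h1 : Measurable fun pth : NNReal → K × ℝ × (K → ℝ) => (pth t).2.2 k :=
          (measurable_pi_apply k).comp (measurable_pi_apply t).snd.snd
        exact h1.comp (comap_measurable (Φ i))
      have hgm : Measurable[MeasurableSpace.comap (Φ i) inferInstance]
          (Set.indicator {ω | X i t ω = k} (fun _ => (1 : ℝ))) := by
        refine Measurable.indicator measurable_const ?_
        exact ⟨{pth | (pth t).1 = k},
          (measurable_pi_apply t).fst (measurableSet_singleton k), rfl⟩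
      rw [hp1, hq1, hAeq, key i _ hfm Ai hAimΦ, key i _ hgm Ai hAimΦ, key2 i Ai hAim]
    have h01 : {ω | ξ ω = 1} = {ω | ξ ω = 0}ᶜ := by
      ext ω
      simp only [Set.mem_setOf_eq, Set.mem_compl_iff]
      constructor
      · intro h h0
        rw [h0] at h
        exact absurd h (by decide)
      · intro h
        exact (ξ ω).eq_one_of_ne_zero h
    have hsplit : ∀ r : Ω → ℝ, Integrable r μ →
        ∫ ω in A, r ω ∂μ
          = ∫ ω in A ∩ {ω | ξ ω = 0}, r ω ∂μ + ∫ ω in A ∩ {ω | ξ ω = 1}, r ω ∂μ := by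
      intro r hr
      rw [h01]
      have h2 := integral_add_compl (μ := μ.restrict A) (hξset 0) hr.restrict
      rw [Measure.restrict_restrict (hξset 0), Measure.restrict_restrict (hξset 0).compl,
        Set.inter_comm, Set.inter_comm ({ω | ξ ω = 0})ᶜ] at h2
      exact h2.symm
    rw [hsplit p hpint, hsplit q hqint, piece 0, piece 1]
  -- extend to all m-measurable sets via the π-system of finite intersections
  have hq_eq : ∀ s : Set Ω, MeasurableSet[sigUpTo Wmix t] s →
      ∫ ω in s, p ω ∂μ = ∫ ω in s, q ω ∂μ := by
    have hPi : IsPiSystem (piiUnionInter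
        (fun s => {A | MeasurableSet[MeasurableSpace.comap (Wmix s) inferInstance] A})
        (Set.Iic t)) :=
      isPiSystem_piiUnionInter _
        (fun s => @MeasurableSpace.isPiSystem_measurableSet Ω
          (MeasurableSpace.comap (Wmix s) inferInstance)) _
    refine MeasurableSpace.induction_on_inter
      (C := fun A _ => ∫ ω in A, p ω ∂μ = ∫ ω in A, q ω ∂μ)
      (sigUpTo_eq_generateFrom Wmix t) hPi ?_ ?_ ?_ ?_
    · simp
    · rintro A ⟨T, hTsub, fs, hfs, rfl⟩
      choose! B hB1 hB2 using fun x (hx : x ∈ T) => hfs x hx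
      have hfsm0 : ∀ x ∈ T, MeasurableSet (fs x) := by
        intro x hx
        rw [← hB2 x hx]
        exact hWmixm x (hB1 x hx)
      refine main _ (T.measurableSet_biInter hfsm0) fun i => ?_
      refine ⟨⋂ x ∈ T, W i x ⁻¹' B x, ?_, ?_⟩
      · refine @Finset.measurableSet_biInter Ω NNReal (sigUpTo (W i) t) _ T fun x hx => ?_
        exact le_sigUpTo (W i) (hTsub hx) _ ⟨B x, hB1 x hx, rfl⟩
      · ext ω
        simp only [Set.mem_inter_iff, Set.mem_iInter, Set.mem_setOf_eq, Set.mem_preimage]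
        constructor
        · rintro ⟨hmem, hi⟩
          refine ⟨fun x hx => ?_, hi⟩
          have h3 := hmem x hx
          rw [← hB2 x hx] at h3
          have h4 : Wmix x ω = W i x ω := by rw [hWmix_def, hW_def]; simp [hi]
          rw [← h4]
          exact h3
        · rintro ⟨hmem, hi⟩
          refine ⟨fun x hx => ?_, hi⟩
          rw [← hB2 x hx]
          have h4 : Wmix x ω = W i x ω := by rw [hWmix_def, hW_def]; simp [hi]
          rw [Set.mem_preimage, h4]
          exact hmem x hx
    · intro s hs hCs
      have hs0 : MeasurableSet s := hm _ hs
      have htot : ∫ ω, p ω ∂μ = ∫ ω, q ω ∂μ := by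
        have := main Set.univ MeasurableSet.univ
          (fun i => ⟨Set.univ, @MeasurableSet.univ Ω (sigUpTo (W i) t),
            by rw [Set.univ_inter]⟩)
        simpa using this
      have h1 := integral_add_compl hs0 hpint
      have h2 := integral_add_compl hs0 hqint
      linarith
    · intro fseq hdisj hmeas hC
      have h0 : ∀ n, MeasurableSet (fseq n) := fun n => hm _ (hmeas n)
      rw [integral_iUnion h0 hdisj hpint.integrableOn,
        integral_iUnion h0 hdisj hqint.integrableOn]
      exact tsum_congr hC
  -- conclude by uniqueness of conditional expectation
  have hpm : AEStronglyMeasurable[sigUpTo Wmix t] p μ := by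
    have h1 : Measurable[MeasurableSpace.comap (Wmix t) inferInstance] p := by
      have h2 : Measurable fun r : ℝ × (K → ℝ) => r.2 k :=
        (measurable_pi_apply k).comp measurable_snd
      exact h2.comp (comap_measurable _)
    have hle : MeasurableSpace.comap (Wmix t) inferInstance ≤ sigUpTo Wmix t :=
      le_sigUpTo Wmix (Set.mem_Iic.mpr le_rfl)
    exact ((h1.mono hle le_rfl).stronglyMeasurable).aestronglyMeasurable
  have hfinal := ae_eq_condExp_of_forall_setIntegral_eq (m := sigUpTo Wmix t) (m₀ := m0) (μ := μ) hm
    (f := q) (g := p) hqint (fun s _ _ => hpint.integrableOn) (fun s hs _ => hq_eq s hs) hpm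
  exact hfinal
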